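/- Let q be a prime power. In PG(3,q) there are no proper bilinear star flocks of wide cones: if F(f,g,h) is a bilinear flock (there exist two distinct lines L₁, L₂ of PG(3,q) such that every plane of the flock contains L₁ or contains L₂) which is also a proper star flock (exactly one point of PG(3,q) lies in every plane of the flock), then the critical cone of F(f,g,h) is not wide. -/

import Mathlib

/-- The carrier of the critical cone of the flock `F(f,g,h)`, viewed inside `PG(2,q)`
(the plane `x₃ = 0`): the set of points `(a:b:c)` for which `t ↦ a·f(t)+b·g(t)+c·h(t)`
is a bijection of `GF(q)`. -/
def carrierSet (F : Type) [Field F] [Fintype F] (f g h : F → F) :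
    Set (Projectivization F (Fin 3 → F)) :=
  {P | Function.Bijective (fun t => P.rep 0 * f t + P.rep 1 * g t + P.rep 2 * h t)}

/-- `widthAt F S P` is `w_S(P)`: the number of lines of `PG(2,q)` through the point `P`
which contain a point of `S` (lines represented dually as points of `PG(2,q)`, a line
`L` passing through `Q` iff `L₀Q₀ + L₁Q₁ + L₂Q₂ = 0`). -/
noncomputable def widthAt (F : Type) [Field F] [Fintype F]
    (S : Set (Projectivization F (Fin 3 → F))) (P : Projectivization F (Fin 3 → F)) : ℕ :=
  Nat.card {L : Projectivization F (Fin 3 → F) |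
    (L.rep 0 * P.rep 0 + L.rep 1 * P.rep 1 + L.rep 2 * P.rep 2 = 0) ∧
    ∃ Q ∈ S, L.rep 0 * Q.rep 0 + L.rep 1 * Q.rep 1 + L.rep 2 * Q.rep 2 = 0}

/-- A set `S` of points of `PG(2,q)` is wide when its width `W_S = min_P w_S(P)` is at
least `⌊(q+2)/2⌋`. -/
def IsWide (F : Type) [Field F] [Fintype F]
    (S : Set (Projectivization F (Fin 3 → F))) : Prop :=
  ∀ P : Projectivization F (Fin 3 → F), (Fintype.card F + 2) / 2 ≤ widthAt F S P



namespace Stmt13Aux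

variable {F : Type} [Field F]

def dot3 (a b : Fin 3 → F) : F := a 0 * b 0 + a 1 * b 1 + a 2 * b 2

def cross3 (a b : Fin 3 → F) : Fin 3 → F :=
  ![a 1 * b 2 - a 2 * b 1, a 2 * b 0 - a 0 * b 2, a 0 * b 1 - a 1 * b 0]

lemma dot3_comm (a b : Fin 3 → F) : dot3 a b = dot3 b a := by simp only [dot3]; ring

lemma dot3_add_right (a b c : Fin 3 → F) : dot3 a (b + c) = dot3 a b + dot3 a c := by
  simp only [dot3, Pi.add_apply]; ring

lemma dot3_sub_right (a b c : Fin 3 → F) : dot3 a (b - c) = dot3 a b - dot3 a c := by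
  simp only [dot3, Pi.sub_apply]; ring

lemma dot3_smul_right (a : Fin 3 → F) (s : F) (b : Fin 3 → F) :
    dot3 a (s • b) = s * dot3 a b := by
  simp only [dot3, Pi.smul_apply, smul_eq_mul]; ring

lemma dot3_smul_left (a : Fin 3 → F) (s : F) (b : Fin 3 → F) :
    dot3 (s • a) b = s * dot3 a b := by
  simp only [dot3, Pi.smul_apply, smul_eq_mul]; ring

lemma cross3_cross3_eq_zero {a b y : Fin 3 → F} (h1 : dot3 a y = 0) (h2 : dot3 b y = 0) :
    cross3 (cross3 a b) y = 0 := by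
  simp only [dot3] at h1 h2
  have e0 : cross3 (cross3 a b) y 0 = 0 := by
    simp only [cross3, Matrix.cons_val_zero, Matrix.cons_val_one, Matrix.head_cons,
      Matrix.cons_val_two, Matrix.tail_cons]
    linear_combination b 0 * h1 - a 0 * h2
  have e1 : cross3 (cross3 a b) y 1 = 0 := by
    simp only [cross3, Matrix.cons_val_zero, Matrix.cons_val_one, Matrix.head_cons,
      Matrix.cons_val_two, Matrix.tail_cons]
    linear_combination b 1 * h1 - a 1 * h2
  have e2 : cross3 (cross3 a b) y 2 = 0 := by
    simp only [cross3, Matrix.cons_val_zero, Matrix.cons_val_one, Matrix.head_cons,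
      Matrix.cons_val_two, Matrix.tail_cons]
    linear_combination b 2 * h1 - a 2 * h2
  funext i
  fin_cases i
  · exact e0
  · exact e1
  · exact e2

lemma exists_smul_of_cross3_eq_zero {c y : Fin 3 → F} (hc : c ≠ 0)
    (h : cross3 c y = 0) : ∃ k : F, y = k • c := by
  have h0 := congrFun h 0
  have h1 := congrFun h 1
  have h2 := congrFun h 2
  simp only [cross3, Matrix.cons_val_zero, Matrix.cons_val_one, Matrix.head_cons,
    Matrix.cons_val_two, Matrix.tail_cons, Pi.zero_apply] at h0 h1 h2
  obtain ⟨i, hi⟩ : ∃ i, c i ≠ 0 := by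
    by_contra hcon
    push_neg at hcon
    exact hc (funext fun i => hcon i)
  fin_cases i
  · have hi' : c 0 ≠ 0 := hi
    have ec0 : y 0 = y 0 / c 0 * c 0 := by field_simp
    have ec1 : y 1 = y 0 / c 0 * c 1 := by
      rw [div_mul_eq_mul_div, eq_div_iff hi']; linear_combination h2
    have ec2 : y 2 = y 0 / c 0 * c 2 := by
      rw [div_mul_eq_mul_div, eq_div_iff hi']; linear_combination -h1
    refine ⟨y 0 / c 0, funext fun j => ?_⟩
    fin_cases j
    · exact ec0
    · exact ec1
    · exact ec2
  · have hi' : c 1 ≠ 0 := hi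
    have ec0 : y 0 = y 1 / c 1 * c 0 := by
      rw [div_mul_eq_mul_div, eq_div_iff hi']; linear_combination -h2
    have ec1 : y 1 = y 1 / c 1 * c 1 := by field_simp
    have ec2 : y 2 = y 1 / c 1 * c 2 := by
      rw [div_mul_eq_mul_div, eq_div_iff hi']; linear_combination h0
    refine ⟨y 1 / c 1, funext fun j => ?_⟩
    fin_cases j
    · exact ec0
    · exact ec1
    · exact ec2
  · have hi' : c 2 ≠ 0 := hi
    have ec0 : y 0 = y 2 / c 2 * c 0 := by
      rw [div_mul_eq_mul_div, eq_div_iff hi']; linear_combination h1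
    have ec1 : y 1 = y 2 / c 2 * c 1 := by
      rw [div_mul_eq_mul_div, eq_div_iff hi']; linear_combination -h0
    have ec2 : y 2 = y 2 / c 2 * c 2 := by field_simp
    refine ⟨y 2 / c 2, funext fun j => ?_⟩
    fin_cases j
    · exact ec0
    · exact ec1
    · exact ec2

end Stmt13Aux


namespace Stmt13AuxB

def psi4 (F : Type) [Field F] : (Fin 4 → F) →ₗ[F] Module.Dual F (Fin 4 → F) :=
  LinearMap.mk₂ F (fun x y => x 0 * y 0 + x 1 * y 1 + x 2 * y 2 + x 3 * y 3)
    (fun m₁ m₂ y => by simp only [Pi.add_apply]; ring)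
    (fun c m y => by simp only [Pi.smul_apply, smul_eq_mul]; ring)
    (fun x y₁ y₂ => by simp only [Pi.add_apply]; ring)
    (fun c x y => by simp only [Pi.smul_apply, smul_eq_mul]; ring)

lemma three_dep {F : Type} [Field F] (L : Submodule F (Fin 4 → F))
    (hL : Module.finrank F L = 2) (n : Fin 3 → (Fin 4 → F))
    (hn : ∀ i, ∀ w ∈ L, n i 0 * w 0 + n i 1 * w 1 + n i 2 * w 2 + n i 3 * w 3 = 0) :
    ∃ g : Fin 3 → F, (g 0 • n 0 + g 1 • n 1 + g 2 • n 2 = 0) ∧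
      ¬(g 0 = 0 ∧ g 1 = 0 ∧ g 2 = 0) := by
  classical
  set ψ : (Fin 4 → F) →ₗ[F] Module.Dual F (Fin 4 → F) := psi4 F with hψdef
  have hψapp : ∀ x y, ψ x y = x 0 * y 0 + x 1 * y 1 + x 2 * y 2 + x 3 * y 3 :=
    fun x y => rfl
  have hψinj : ∀ x, ψ x = 0 → x = 0 := by
    intro x hx
    funext j
    have hj := LinearMap.congr_fun hx (Pi.single j 1)
    rw [hψapp] at hj
    fin_cases j <;>
      simpa [Pi.single_apply] using hj
  have hmemA : ∀ i, ψ (n i) ∈ L.dualAnnihilator := by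
    intro i
    rw [Submodule.mem_dualAnnihilator]
    intro w hw
    rw [hψapp]
    exact hn i w hw
  have hrkA : Module.finrank F L.dualAnnihilator = 2 := by
    have h4 : Module.finrank F (Fin 4 → F) = 4 := Module.finrank_fin_fun (R := F)
    have e : Module.finrank F ((Fin 4 → F) ⧸ L) = Module.finrank F L.dualAnnihilator :=
      LinearEquiv.finrank_eq (Subspace.quotEquivAnnihilator L)
    have hq := Submodule.finrank_quotient_add_finrank L
    omega
  have hnotLI : ¬ LinearIndependent F (fun i : Fin 3 => ψ (n i)) := by
    intro hLI
    have hsp : Submodule.span F (Set.range fun i : Fin 3 => ψ (n i)) ≤ L.dualAnnihilator := by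
      rw [Submodule.span_le]
      rintro x ⟨i, rfl⟩
      exact hmemA i
    have h1 : Module.finrank F (Submodule.span F (Set.range fun i : Fin 3 => ψ (n i))) = 3 := by
      rw [finrank_span_eq_card hLI]
      simp
    have h2 := Submodule.finrank_mono hsp
    rw [h1, hrkA] at h2
    omega
  rw [Fintype.not_linearIndependent_iff] at hnotLI
  obtain ⟨g, hg, i, hgi⟩ := hnotLI
  refine ⟨g, ?_, ?_⟩
  · have hψ0 : ψ (g 0 • n 0 + g 1 • n 1 + g 2 • n 2) = 0 := by
      rw [map_add, map_add, map_smul, map_smul, map_smul]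
      simpa [Fin.sum_univ_three] using hg
    exact hψinj _ hψ0
  · rintro ⟨e0, e1, e2⟩
    fin_cases i
    · exact hgi e0
    · exact hgi e1
    · exact hgi e2

lemma collin {F : Type} [Field F] (f g h : F → F)
    (hinj : Function.Injective (fun t => (f t, g t, h t)))
    (L : Submodule F (Fin 4 → F)) (hL : Module.finrank F L = 2)
    (t_a t_b t : F) (htab : t_a ≠ t_b)
    (ha : ∀ w ∈ L, f t_a * w 0 + g t_a * w 1 + h t_a * w 2 - w 3 = 0)
    (hb : ∀ w ∈ L, f t_b * w 0 + g t_b * w 1 + h t_b * w 2 - w 3 = 0)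
    (ht : ∀ w ∈ L, f t * w 0 + g t * w 1 + h t * w 2 - w 3 = 0) :
    ∃ s : F, (![f t, g t, h t] : Fin 3 → F)
      = ![f t_a, g t_a, h t_a] + s • (![f t_b, g t_b, h t_b] - ![f t_a, g t_a, h t_a]) := by
  have hn : ∀ i, ∀ w ∈ L,
      (![![f t_a, g t_a, h t_a, -1], ![f t_b, g t_b, h t_b, -1],
        ![f t, g t, h t, -1]] : Fin 3 → Fin 4 → F) i 0 * w 0 +
      ![![f t_a, g t_a, h t_a, -1], ![f t_b, g t_b, h t_b, -1], ![f t, g t, h t, -1]] i 1 * w 1 +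
      ![![f t_a, g t_a, h t_a, -1], ![f t_b, g t_b, h t_b, -1], ![f t, g t, h t, -1]] i 2 * w 2 +
      ![![f t_a, g t_a, h t_a, -1], ![f t_b, g t_b, h t_b, -1], ![f t, g t, h t, -1]] i 3 * w 3
        = 0 := by
    have c0 : ∀ w ∈ L,
        (![f t_a, g t_a, h t_a, (-1 : F)]) 0 * w 0 + (![f t_a, g t_a, h t_a, (-1:F)]) 1 * w 1 +
        (![f t_a, g t_a, h t_a, (-1:F)]) 2 * w 2 + (![f t_a, g t_a, h t_a, (-1:F)]) 3 * w 3 = 0 := by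
      intro w hw
      simp only [Matrix.cons_val_zero, Matrix.cons_val_one, Matrix.head_cons,
        Matrix.cons_val_two, Matrix.tail_cons, Matrix.cons_val_three]
      linear_combination ha w hw
    have c1 : ∀ w ∈ L,
        (![f t_b, g t_b, h t_b, (-1 : F)]) 0 * w 0 + (![f t_b, g t_b, h t_b, (-1:F)]) 1 * w 1 +
        (![f t_b, g t_b, h t_b, (-1:F)]) 2 * w 2 + (![f t_b, g t_b, h t_b, (-1:F)]) 3 * w 3 = 0 := by
      intro w hw
      simp only [Matrix.cons_val_zero, Matrix.cons_val_one, Matrix.head_cons,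
        Matrix.cons_val_two, Matrix.tail_cons, Matrix.cons_val_three]
      linear_combination hb w hw
    have c2 : ∀ w ∈ L,
        (![f t, g t, h t, (-1 : F)]) 0 * w 0 + (![f t, g t, h t, (-1:F)]) 1 * w 1 +
        (![f t, g t, h t, (-1:F)]) 2 * w 2 + (![f t, g t, h t, (-1:F)]) 3 * w 3 = 0 := by
      intro w hw
      simp only [Matrix.cons_val_zero, Matrix.cons_val_one, Matrix.head_cons,
        Matrix.cons_val_two, Matrix.tail_cons, Matrix.cons_val_three]
      linear_combination ht w hw
    intro i
    fin_cases i
    · exact c0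
    · exact c1
    · exact c2
  obtain ⟨G, hsum, hne⟩ := three_dep L hL
    ![![f t_a, g t_a, h t_a, -1], ![f t_b, g t_b, h t_b, -1], ![f t, g t, h t, -1]] hn
  have h0 := congrFun hsum 0
  have h1 := congrFun hsum 1
  have h2 := congrFun hsum 2
  have h3 := congrFun hsum 3
  simp only [Matrix.cons_val_zero, Matrix.cons_val_one, Matrix.head_cons,
    Matrix.cons_val_two, Matrix.tail_cons, Matrix.cons_val_three, Pi.add_apply,
    Pi.smul_apply, smul_eq_mul, Pi.zero_apply, Matrix.cons_val_fin_one] at h0 h1 h2 h3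
  have hsum3 : G 0 + G 1 + G 2 = 0 := by linear_combination -h3
  by_cases hG2 : G 2 = 0
  · exfalso
    have hG1 : G 1 = -G 0 := by linear_combination hsum3 - hG2
    have hG0' : G 0 ≠ 0 := by
      intro e
      exact hne ⟨e, by rw [hG1, e, neg_zero], hG2⟩
    have hfa : f t_a = f t_b := by
      have h' : G 0 * (f t_a - f t_b) = 0 := by
        linear_combination h0 - f t_b * hG1 - f t * hG2
      exact sub_eq_zero.mp ((mul_eq_zero.mp h').resolve_left hG0')
    have hga : g t_a = g t_b := by
      have h' : G 0 * (g t_a - g t_b) = 0 := by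
        linear_combination h1 - g t_b * hG1 - g t * hG2
      exact sub_eq_zero.mp ((mul_eq_zero.mp h').resolve_left hG0')
    have hha : h t_a = h t_b := by
      have h' : G 0 * (h t_a - h t_b) = 0 := by
        linear_combination h2 - h t_b * hG1 - h t * hG2
      exact sub_eq_zero.mp ((mul_eq_zero.mp h').resolve_left hG0')
    apply htab
    apply hinj
    simp only [Prod.mk.injEq]
    exact ⟨hfa, hga, hha⟩
  · set s : F := -(G 1) / G 2 with hsdef
    have hs : G 2 * s = -(G 1) := by
      rw [hsdef]; field_simp
    have ef : f t = f t_a + s * (f t_b - f t_a) :=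
      mul_left_cancel₀ hG2 (by linear_combination h0 - f t_a * hsum3 - (f t_b - f t_a) * hs)
    have eg : g t = g t_a + s * (g t_b - g t_a) :=
      mul_left_cancel₀ hG2 (by linear_combination h1 - g t_a * hsum3 - (g t_b - g t_a) * hs)
    have eh : h t = h t_a + s * (h t_b - h t_a) :=
      mul_left_cancel₀ hG2 (by linear_combination h2 - h t_a * hsum3 - (h t_b - h t_a) * hs)
    refine ⟨s, funext fun j => ?_⟩
    have j0 : (![f t, g t, h t] : Fin 3 → F) 0
        = (![f t_a, g t_a, h t_a] + s • (![f t_b, g t_b, h t_b] - ![f t_a, g t_a, h t_a])) 0 := by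
      simp only [Pi.add_apply, Pi.smul_apply, Pi.sub_apply, smul_eq_mul,
        Matrix.cons_val_zero]
      exact ef
    have j1 : (![f t, g t, h t] : Fin 3 → F) 1
        = (![f t_a, g t_a, h t_a] + s • (![f t_b, g t_b, h t_b] - ![f t_a, g t_a, h t_a])) 1 := by
      simp only [Pi.add_apply, Pi.smul_apply, Pi.sub_apply, smul_eq_mul,
        Matrix.cons_val_one, Matrix.head_cons]
      exact eg
    have j2 : (![f t, g t, h t] : Fin 3 → F) 2
        = (![f t_a, g t_a, h t_a] + s • (![f t_b, g t_b, h t_b] - ![f t_a, g t_a, h t_a])) 2 := by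
      simp only [Pi.add_apply, Pi.smul_apply, Pi.sub_apply, smul_eq_mul,
        Matrix.cons_val_two, Matrix.tail_cons, Matrix.head_cons]
      exact eh
    fin_cases j
    · exact j0
    · exact j1
    · exact j2

end Stmt13AuxB


open Stmt13Aux Stmt13AuxB in
lemma stmt13_key (F : Type) [Field F] [Fintype F] (f g h : F → F)
    (hf0 : f 0 = 0) (hg0 : g 0 = 0) (hh0 : h 0 = 0)
    (hinj : Function.Injective (fun t => (f t, g t, h t)))
    (v : Fin 3 → F) (hv : v ≠ 0)
    (hdotv : ∀ t : F, Stmt13Aux.dot3 v ![f t, g t, h t] = 0)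
    (hspan : ∃ t₁ t₂ : F, ∀ a b : F,
      a • (![f t₁, g t₁, h t₁] : Fin 3 → F) + b • ![f t₂, g t₂, h t₂] = 0 → a = 0 ∧ b = 0)
    (t_a t_b : F) (htab : t_a ≠ t_b)
    (Sb : Finset F)
    (hmem : ∀ t ∈ Sb, ∃ s : F, (![f t, g t, h t] : Fin 3 → F)
        = ![f t_a, g t_a, h t_a] + s • (![f t_b, g t_b, h t_b] - ![f t_a, g t_a, h t_a]))
    (hSb : Fintype.card F ≤ 2 * Sb.card) :
    ¬ IsWide F (carrierSet F f g h) := by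
  classical
  intro hW
  set δ : F → (Fin 3 → F) := fun t => ![f t, g t, h t] with hδdef
  have hδt : ∀ t, δ t = ![f t, g t, h t] := fun t => rfl
  have hδinj : Function.Injective δ := by
    intro a b hab
    apply hinj
    have e0 := congrFun hab 0
    have e1 := congrFun hab 1
    have e2 := congrFun hab 2
    simp only [hδt, Matrix.cons_val_zero, Matrix.cons_val_one, Matrix.head_cons,
      Matrix.cons_val_two, Matrix.tail_cons] at e0 e1 e2
    show (f a, g a, h a) = (f b, g b, h b)
    simp only [Prod.mk.injEq]
    exact ⟨e0, e1, e2⟩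
  have hδ0 : δ 0 = 0 := by
    funext i
    fin_cases i <;> simp [hδt, hf0, hg0, hh0]
  have hdotv' : ∀ t, dot3 v (δ t) = 0 := fun t => hdotv t
  have hmem' : ∀ t ∈ Sb, ∃ s : F, δ t = δ t_a + s • (δ t_b - δ t_a) := hmem
  have hspan' : ∃ t₁ t₂ : F, ∀ a b : F, a • δ t₁ + b • δ t₂ = 0 → a = 0 ∧ b = 0 := hspan
  have hdab : δ t_a ≠ δ t_b := fun e => htab (hδinj e)
  obtain ⟨u₁, u₂, hu⟩ := hspan'
  obtain ⟨t₂, ht₂⟩ : ∃ t₂ : F, ∀ s : F, δ t₂ ≠ δ t_a + s • (δ t_b - δ t_a) := by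
    by_contra hcon
    push_neg at hcon
    obtain ⟨s₀, hs₀⟩ := hcon 0
    obtain ⟨s₁, hs₁⟩ := hcon u₁
    obtain ⟨s₂, hs₂⟩ := hcon u₂
    rw [hδ0] at hs₀
    have hpa : δ t_a = -s₀ • (δ t_b - δ t_a) := by
      rw [neg_smul]
      exact eq_neg_of_add_eq_zero_left hs₀.symm
    have e1 : δ u₁ = (s₁ - s₀) • (δ t_b - δ t_a) := by
      rw [hs₁]
      nth_rewrite 1 [hpa]
      rw [sub_smul, neg_smul]
      module
    have e2 : δ u₂ = (s₂ - s₀) • (δ t_b - δ t_a) := by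
      rw [hs₂]
      nth_rewrite 1 [hpa]
      rw [sub_smul, neg_smul]
      module
    have h12 := hu (s₂ - s₀) (-(s₁ - s₀)) (by
      rw [e1, e2, smul_smul, smul_smul, ← add_smul]
      have hz : (s₂ - s₀) * (s₁ - s₀) + -(s₁ - s₀) * (s₂ - s₀) = 0 := by ring
      rw [hz, zero_smul])
    have hs10 : s₁ - s₀ = 0 := neg_eq_zero.mp h12.2
    have e1z : δ u₁ = 0 := by rw [e1, hs10, zero_smul]
    have h10 := hu 1 0 (by rw [e1z]; simp)
    exact one_ne_zero h10.1
  have hWP := hW (Projectivization.mk F v hv)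
  set P : Projectivization F (Fin 3 → F) := Projectivization.mk F v hv with hPdef
  obtain ⟨aU, haU⟩ : ∃ a : Fˣ, (a : F) • v = P.rep := by
    have h1 : Projectivization.mk F P.rep P.rep_nonzero = Projectivization.mk F v hv := by
      rw [Projectivization.mk_rep, hPdef]
    exact (Projectivization.mk_eq_mk_iff F P.rep v P.rep_nonzero hv).mp h1
  set T : Set (Projectivization F (Fin 3 → F)) :=
    {L | (L.rep 0 * P.rep 0 + L.rep 1 * P.rep 1 + L.rep 2 * P.rep 2 = 0) ∧
      ∃ Q ∈ carrierSet F f g h,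
        L.rep 0 * Q.rep 0 + L.rep 1 * Q.rep 1 + L.rep 2 * Q.rep 2 = 0} with hTdef
  have hwidth : widthAt F (carrierSet F f g h) P = Nat.card T := rfl
  have hQ : ∀ L : Projectivization F (Fin 3 → F), L ∈ T →
      ∃ Q : Projectivization F (Fin 3 → F),
        Function.Bijective (fun t => Q.rep 0 * f t + Q.rep 1 * g t + Q.rep 2 * h t) ∧
        dot3 L.rep Q.rep = 0 ∧ dot3 L.rep v = 0 := by
    intro L hL
    rw [hTdef, Set.mem_setOf_eq] at hL
    obtain ⟨h1, Q, hQc, hQd⟩ := hL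
    refine ⟨Q, hQc, by simpa [dot3] using hQd, ?_⟩
    have h2 : dot3 L.rep ((aU : F) • v) = 0 := by rw [haU]; simpa [dot3] using h1
    rw [dot3_smul_right] at h2
    exact (mul_eq_zero.mp h2).resolve_left aU.ne_zero
  choose Qf hQ1 hQ2 hQ3 using hQ
  have hβ : ∀ (L) (hL : L ∈ T) (t : F),
      dot3 (Qf L hL).rep (δ t)
        = (Qf L hL).rep 0 * f t + (Qf L hL).rep 1 * g t + (Qf L hL).rep 2 * h t := by
    intro L hL t
    simp [dot3, hδt]
  have hQd0 : ∀ (L) (hL : L ∈ T), dot3 (Qf L hL).rep (δ t_b - δ t_a) ≠ 0 := by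
    intro L hL e
    rw [dot3_sub_right, hβ L hL t_b, hβ L hL t_a, sub_eq_zero] at e
    exact htab ((hQ1 L hL).injective e).symm
  set σ : ∀ (L : Projectivization F (Fin 3 → F)), L ∈ T → F := fun L hL =>
    (dot3 (Qf L hL).rep (δ t₂) - dot3 (Qf L hL).rep (δ t_a))
      / dot3 (Qf L hL).rep (δ t_b - δ t_a) with hσdef
  have hσx : ∀ (L) (hL : L ∈ T),
      dot3 (Qf L hL).rep (δ t_a + σ L hL • (δ t_b - δ t_a))
        = dot3 (Qf L hL).rep (δ t₂) := by
    intro L hL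
    rw [dot3_add_right, dot3_smul_right, hσdef]
    rw [div_mul_cancel₀ _ (hQd0 L hL)]
    ring
  have hσX : ∀ (L) (hL : L ∈ T) (t : F),
      δ t ≠ δ t_a + σ L hL • (δ t_b - δ t_a) := by
    intro L hL t ht
    have e : dot3 (Qf L hL).rep (δ t) = dot3 (Qf L hL).rep (δ t₂) := by
      rw [ht]; exact hσx L hL
    rw [hβ L hL t, hβ L hL t₂] at e
    have het : t = t₂ := (hQ1 L hL).injective e
    rw [het] at ht
    exact ht₂ _ ht
  have key1 : ∀ (L) (hL : L ∈ T) (s : F), σ L hL = s →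
      ∀ (hwne : δ t_a + s • (δ t_b - δ t_a) - δ t₂ ≠ 0),
      L = Projectivization.mk F (δ t_a + s • (δ t_b - δ t_a) - δ t₂) hwne := by
    intro L hL s hs hwne
    have hcQ : cross3 (Qf L hL).rep v ≠ 0 := by
      intro hc0
      obtain ⟨k, hk⟩ :=
        exists_smul_of_cross3_eq_zero (Projectivization.rep_nonzero (Qf L hL)) hc0
      obtain ⟨t', ht'⟩ := (hQ1 L hL).surjective 1
      have hz : dot3 v (δ t') = 0 := hdotv' t'
      rw [hk, dot3_smul_left] at hz
      have hone : dot3 (Qf L hL).rep (δ t') = 1 := by rw [hβ L hL t']; exact ht'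
      rw [hone, mul_one] at hz
      rw [hz, zero_smul] at hk
      exact hv hk
    have hLQ : dot3 (Qf L hL).rep L.rep = 0 := by rw [dot3_comm]; exact hQ2 L hL
    have hLv : dot3 v L.rep = 0 := by rw [dot3_comm]; exact hQ3 L hL
    obtain ⟨k₁, hk₁⟩ :=
      exists_smul_of_cross3_eq_zero hcQ (cross3_cross3_eq_zero hLQ hLv)
    have hQw : dot3 (Qf L hL).rep (δ t_a + s • (δ t_b - δ t_a) - δ t₂) = 0 := by
      have hx := hσx L hL
      rw [hs] at hx
      rw [dot3_sub_right, hx, sub_self]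
    have hvw : dot3 v (δ t_a + s • (δ t_b - δ t_a) - δ t₂) = 0 := by
      rw [dot3_sub_right, dot3_add_right, dot3_smul_right, dot3_sub_right]
      rw [hdotv' t_a, hdotv' t_b, hdotv' t₂]
      ring
    obtain ⟨k₂, hk₂⟩ :=
      exists_smul_of_cross3_eq_zero hcQ (cross3_cross3_eq_zero hQw hvw)
    have hk₂0 : k₂ ≠ 0 := by
      rintro rfl
      rw [zero_smul] at hk₂
      exact hwne hk₂
    have hrep : L.rep = (k₁ / k₂) • (δ t_a + s • (δ t_b - δ t_a) - δ t₂) := by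
      rw [hk₁, hk₂, smul_smul]
      congr 1
      field_simp
    calc L = Projectivization.mk F L.rep L.rep_nonzero := (Projectivization.mk_rep L).symm
      _ = Projectivization.mk F (δ t_a + s • (δ t_b - δ t_a) - δ t₂) hwne := by
          rw [Projectivization.mk_eq_mk_iff']
          exact ⟨k₁ / k₂, hrep.symm⟩
  set Xf : Finset F := Finset.univ.filter
    (fun s : F => ∀ t : F, δ t ≠ δ t_a + s • (δ t_b - δ t_a)) with hXdef
  have hcard1 : Nat.card T ≤ Xf.card := by
    have hmap : ∀ L : T, σ L.1 L.2 ∈ Xf := by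
      intro L
      rw [hXdef, Finset.mem_filter]
      exact ⟨Finset.mem_univ _, fun t => hσX L.1 L.2 t⟩
    have hinjΦ : Function.Injective
        (fun L : T => (⟨σ L.1 L.2, hmap L⟩ : {x // x ∈ Xf})) := by
      intro L L' he
      have hss : σ L'.1 L'.2 = σ L.1 L.2 := (congrArg Subtype.val he).symm
      have hwne : δ t_a + σ L.1 L.2 • (δ t_b - δ t_a) - δ t₂ ≠ 0 := by
        intro e
        exact ht₂ (σ L.1 L.2) ((sub_eq_zero.mp e).symm)
      have e1 := key1 L.1 L.2 (σ L.1 L.2) rfl hwne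
      have e2 := key1 L'.1 L'.2 (σ L.1 L.2) hss hwne
      exact Subtype.ext (e1.trans e2.symm)
    calc Nat.card T ≤ Nat.card {x // x ∈ Xf} :=
          Nat.card_le_card_of_injective _ hinjΦ
      _ = Xf.card := Nat.card_eq_finsetCard Xf
  have hcard2 : Xf.card + Sb.card ≤ Fintype.card F := by
    set Yf : Finset F := Finset.univ.filter
      (fun s : F => ¬ ∀ t : F, δ t ≠ δ t_a + s • (δ t_b - δ t_a)) with hYdef
    have hXY : Xf.card + Yf.card = Fintype.card F := by
      rw [hXdef, hYdef, Finset.card_filter_add_card_filter_not, Finset.card_univ]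
    have hSY : Sb.card ≤ Yf.card := by
      have hmem'' : ∀ t : F, ∃ s : F, (t ∈ Sb → δ t = δ t_a + s • (δ t_b - δ t_a)) := by
        intro t
        by_cases ht : t ∈ Sb
        · obtain ⟨s, hs⟩ := hmem' t ht
          exact ⟨s, fun _ => hs⟩
        · exact ⟨0, fun c => absurd c ht⟩
      choose st hst using hmem''
      apply Finset.card_le_card_of_injOn st
      · intro t ht
        rw [hYdef, Finset.mem_coe, Finset.mem_filter]
        refine ⟨Finset.mem_univ _, ?_⟩
        push_neg
        exact ⟨t, hst t ht⟩
      · intro t ht t' ht' hee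
        apply hδinj
        rw [hst t ht, hst t' ht', hee]
    omega
  rw [hwidth] at hWP
  omega


/-- In `PG(3,q)` there are no proper bilinear star flocks of wide
cones: if `F(f,g,h)` is a bilinear flock (there are two distinct lines `L₁ ≠ L₂`, i.e.
2-dimensional subspaces of `GF(q)⁴`, such that every plane of the flock contains `L₁` or
`L₂`) which is also a proper star flock (up to scalars, exactly one nonzero vector — one
projective point — lies in every plane), then the critical cone of `F(f,g,h)` is not
wide. -/
theorem stmt_13 (F : Type) [Field F] [Fintype F]
    (f g h : F → F) (hf0 : f 0 = 0) (hg0 : g 0 = 0) (hh0 : h 0 = 0)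
    (hinj : Function.Injective (fun t => (f t, g t, h t)))
    (L₁ L₂ : Submodule F (Fin 4 → F))
    (hL₁ : Module.finrank F L₁ = 2) (hL₂ : Module.finrank F L₂ = 2) (hLne : L₁ ≠ L₂)
    (hbil : ∀ t : F,
      (∀ v ∈ L₁, f t * v 0 + g t * v 1 + h t * v 2 - v 3 = 0) ∨
      (∀ v ∈ L₂, f t * v 0 + g t * v 1 + h t * v 2 - v 3 = 0))
    (hstar : ∃ v : Fin 4 → F, v ≠ 0 ∧
      ∀ t : F, f t * v 0 + g t * v 1 + h t * v 2 - v 3 = 0)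
    (hproper : ∀ v w : Fin 4 → F, v ≠ 0 → w ≠ 0 →
      (∀ t : F, f t * v 0 + g t * v 1 + h t * v 2 - v 3 = 0) →
      (∀ t : F, f t * w 0 + g t * w 1 + h t * w 2 - w 3 = 0) →
      ∃ lam : F, w = lam • v) :
    ¬ IsWide F (carrierSet F f g h) := by
  classical
  obtain ⟨v4, hv4, hstar4⟩ := hstar
  have hv3 : v4 3 = 0 := by
    have h0 := hstar4 0
    rw [hf0, hg0, hh0] at h0
    linear_combination -h0
  set vb : Fin 3 → F := ![v4 0, v4 1, v4 2] with hvbdef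
  have hvbne : vb ≠ 0 := by
    intro e
    apply hv4
    funext i
    fin_cases i
    · simpa [hvbdef] using congrFun e 0
    · simpa [hvbdef] using congrFun e 1
    · simpa [hvbdef] using congrFun e 2
    · exact hv3
  have hdotv : ∀ t : F, Stmt13Aux.dot3 vb ![f t, g t, h t] = 0 := by
    intro t
    simp only [hvbdef, Stmt13Aux.dot3, Matrix.cons_val_zero, Matrix.cons_val_one,
      Matrix.head_cons, Matrix.cons_val_two, Matrix.tail_cons]
    linear_combination hstar4 t + hv3
  have hspan : ∃ t₁ t₂ : F, ∀ a b : F,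
      a • (![f t₁, g t₁, h t₁] : Fin 3 → F) + b • ![f t₂, g t₂, h t₂] = 0
        → a = 0 ∧ b = 0 := by
    by_contra hns
    push_neg at hns
    obtain ⟨t₀, ht₀⟩ := exists_ne (0 : F)
    set u : Fin 3 → F := ![f t₀, g t₀, h t₀] with hudef
    have hu0 : u ≠ 0 := by
      intro e
      apply ht₀
      apply hinj
      show (f t₀, g t₀, h t₀) = (f 0, g 0, h 0)
      rw [hf0, hg0, hh0]
      simp only [Prod.mk.injEq]
      exact ⟨by simpa [hudef] using congrFun e 0, by simpa [hudef] using congrFun e 1,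
        by simpa [hudef] using congrFun e 2⟩
    have hall : ∀ t : F, ∃ c : F, (![f t, g t, h t] : Fin 3 → F) = c • u := by
      intro t
      obtain ⟨a, b, heq, hcond⟩ := hns t t₀
      by_cases ha : a = 0
      · exfalso
        rw [ha, zero_smul, zero_add] at heq
        rcases smul_eq_zero.mp heq with hb | hu
        · exact hcond ha hb
        · exact hu0 hu
      · refine ⟨-(b / a), ?_⟩
        have h1 : a • (![f t, g t, h t] : Fin 3 → F) = (-b) • u := by
          rw [neg_smul]
          exact eq_neg_of_add_eq_zero_left heq
        have h2 : (![f t, g t, h t] : Fin 3 → F) = (a⁻¹ * -b) • u := by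
          rw [← smul_smul, ← h1, smul_smul, inv_mul_cancel₀ ha, one_smul]
        rw [h2]
        congr 1
        field_simp
    have hcomp : ∀ t : F, ∃ c : F, f t = c * u 0 ∧ g t = c * u 1 ∧ h t = c * u 2 := by
      intro t
      obtain ⟨c, hc⟩ := hall t
      exact ⟨c, by simpa using congrFun hc 0, by simpa using congrFun hc 1,
        by simpa using congrFun hc 2⟩
    have hunz : u 0 ≠ 0 ∨ u 1 ≠ 0 ∨ u 2 ≠ 0 := by
      by_contra hcc
      push_neg at hcc
      apply hu0
      funext i
      fin_cases i
      · simpa using hcc.1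
      · simpa using hcc.2.1
      · simpa using hcc.2.2
    rcases hunz with hU | hU | hU
    · obtain ⟨lam, hlam⟩ := hproper ![u 1, -(u 0), 0, 0] ![u 2, 0, -(u 0), 0]
        (fun e => hU (neg_eq_zero.mp (by simpa using congrFun e 1)))
        (fun e => hU (neg_eq_zero.mp (by simpa using congrFun e 2)))
        (by
          intro t
          obtain ⟨c, hcf, hcg, hch⟩ := hcomp t
          simp only [Matrix.cons_val_zero, Matrix.cons_val_one, Matrix.head_cons,
            Matrix.cons_val_two, Matrix.tail_cons, Matrix.cons_val_three]
          linear_combination u 1 * hcf - u 0 * hcg)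
        (by
          intro t
          obtain ⟨c, hcf, hcg, hch⟩ := hcomp t
          simp only [Matrix.cons_val_zero, Matrix.cons_val_one, Matrix.head_cons,
            Matrix.cons_val_two, Matrix.tail_cons, Matrix.cons_val_three]
          linear_combination u 2 * hcf - u 0 * hch)
      have hco := congrFun hlam 2
      simp only [Matrix.cons_val_two, Matrix.tail_cons, Matrix.head_cons,
        Pi.smul_apply, smul_eq_mul, Matrix.cons_val_one, Matrix.cons_val_zero] at hco
      rw [mul_zero] at hco
      exact hU (neg_eq_zero.mp hco)
    · obtain ⟨lam, hlam⟩ := hproper ![-(u 1), u 0, 0, 0] ![0, u 2, -(u 1), 0]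
        (fun e => hU (neg_eq_zero.mp (by simpa using congrFun e 0)))
        (fun e => hU (neg_eq_zero.mp (by simpa using congrFun e 2)))
        (by
          intro t
          obtain ⟨c, hcf, hcg, hch⟩ := hcomp t
          simp only [Matrix.cons_val_zero, Matrix.cons_val_one, Matrix.head_cons,
            Matrix.cons_val_two, Matrix.tail_cons, Matrix.cons_val_three]
          linear_combination -(u 1) * hcf + u 0 * hcg)
        (by
          intro t
          obtain ⟨c, hcf, hcg, hch⟩ := hcomp t
          simp only [Matrix.cons_val_zero, Matrix.cons_val_one, Matrix.head_cons,
            Matrix.cons_val_two, Matrix.tail_cons, Matrix.cons_val_three]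
          linear_combination u 2 * hcg - u 1 * hch)
      have hco := congrFun hlam 2
      simp only [Matrix.cons_val_two, Matrix.tail_cons, Matrix.head_cons,
        Pi.smul_apply, smul_eq_mul, Matrix.cons_val_one, Matrix.cons_val_zero] at hco
      rw [mul_zero] at hco
      exact hU (neg_eq_zero.mp hco)
    · obtain ⟨lam, hlam⟩ := hproper ![-(u 2), 0, u 0, 0] ![0, -(u 2), u 1, 0]
        (fun e => hU (neg_eq_zero.mp (by simpa using congrFun e 0)))
        (fun e => hU (neg_eq_zero.mp (by simpa using congrFun e 1)))
        (by
          intro t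
          obtain ⟨c, hcf, hcg, hch⟩ := hcomp t
          simp only [Matrix.cons_val_zero, Matrix.cons_val_one, Matrix.head_cons,
            Matrix.cons_val_two, Matrix.tail_cons, Matrix.cons_val_three]
          linear_combination -(u 2) * hcf + u 0 * hch)
        (by
          intro t
          obtain ⟨c, hcf, hcg, hch⟩ := hcomp t
          simp only [Matrix.cons_val_zero, Matrix.cons_val_one, Matrix.head_cons,
            Matrix.cons_val_two, Matrix.tail_cons, Matrix.cons_val_three]
          linear_combination -(u 2) * hcg + u 1 * hch)
      have hco := congrFun hlam 1
      simp only [Matrix.cons_val_two, Matrix.tail_cons, Matrix.head_cons,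
        Pi.smul_apply, smul_eq_mul, Matrix.cons_val_one, Matrix.cons_val_zero] at hco
      rw [mul_zero] at hco
      exact hU (neg_eq_zero.mp hco)
  have hq3 : 3 ≤ Fintype.card F := by
    obtain ⟨w₁, w₂, hw⟩ := hspan
    have h00 : (![f 0, g 0, h 0] : Fin 3 → F) = 0 := by
      funext i
      fin_cases i <;> simp [hf0, hg0, hh0]
    have hne1 : w₁ ≠ (0 : F) := by
      intro e
      have := hw 1 0 (by rw [e, h00]; simp)
      exact one_ne_zero this.1
    have hne2 : w₂ ≠ (0 : F) := by
      intro e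
      have := hw 0 1 (by rw [e, h00]; simp)
      exact one_ne_zero this.2
    have hne12 : w₁ ≠ w₂ := by
      intro e
      have := hw 1 (-1) (by rw [e]; simp)
      exact one_ne_zero this.1
    calc 3 = ({0, w₁, w₂} : Finset F).card := by
          rw [Finset.card_insert_of_notMem (by
            simp only [Finset.mem_insert, Finset.mem_singleton, not_or]
            exact ⟨Ne.symm hne1, Ne.symm hne2⟩),
            Finset.card_insert_of_notMem (by simpa using hne12),
            Finset.card_singleton]
      _ ≤ Fintype.card F := by
          rw [← Finset.card_univ]
          exact Finset.card_le_card (Finset.subset_univ _)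
  set S1 : Finset F := Finset.univ.filter
    (fun t => ∀ w ∈ L₁, f t * w 0 + g t * w 1 + h t * w 2 - w 3 = 0) with hS1def
  set S2 : Finset F := Finset.univ.filter
    (fun t => ∀ w ∈ L₂, f t * w 0 + g t * w 1 + h t * w 2 - w 3 = 0) with hS2def
  have hcards : Fintype.card F ≤ S1.card + S2.card := by
    have hcover : ∀ t : F, t ∈ S1 ∪ S2 := by
      intro t
      rcases hbil t with H | H
      · exact Finset.mem_union_left _ (Finset.mem_filter.mpr ⟨Finset.mem_univ _, H⟩)
      · exact Finset.mem_union_right _ (Finset.mem_filter.mpr ⟨Finset.mem_univ _, H⟩)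
    calc Fintype.card F = (Finset.univ : Finset F).card := (Finset.card_univ).symm
      _ ≤ (S1 ∪ S2).card := Finset.card_le_card (fun t _ => hcover t)
      _ ≤ S1.card + S2.card := Finset.card_union_le _ _
  rcases le_total S2.card S1.card with hbig | hbig
  · have hS1card : Fintype.card F ≤ 2 * S1.card := by omega
    obtain ⟨t_a, hta, t_b, htb, htab⟩ := Finset.one_lt_card.mp (show 1 < S1.card by omega)
    exact stmt13_key F f g h hf0 hg0 hh0 hinj vb hvbne hdotv hspan t_a t_b htab S1
      (fun t ht => Stmt13AuxB.collin f g h hinj L₁ hL₁ t_a t_b t htab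
        (Finset.mem_filter.mp hta).2 (Finset.mem_filter.mp htb).2
        (Finset.mem_filter.mp ht).2)
      hS1card
  · have hS2card : Fintype.card F ≤ 2 * S2.card := by omega
    obtain ⟨t_a, hta, t_b, htb, htab⟩ := Finset.one_lt_card.mp (show 1 < S2.card by omega)
    exact stmt13_key F f g h hf0 hg0 hh0 hinj vb hvbne hdotv hspan t_a t_b htab S2
      (fun t ht => Stmt13AuxB.collin f g h hinj L₂ hL₂ t_a t_b t htab
        (Finset.mem_filter.mp hta).2 (Finset.mem_filter.mp htb).2
        (Finset.mem_filter.mp ht).2)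
      hS2card
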